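/- If W : [0,1] → ℝ^{M×M} is a differentiable solution of dW/ds = − (1/(2(M−1))) · W Wᵀ S W where S := (Y^b)ᵀ R⁻¹ Y^b is symmetric, then P̃(s) := W(s) W(s)ᵀ / (M−1) satisfies the ensemble-space Riccati equation dP̃/ds = − P̃ S P̃. -/

import Mathlib

open Matrix

attribute [local instance] Matrix.normedAddCommGroup Matrix.normedSpace

/-- If `W` solves `dW/ds = −(1/(2(M−1))) W Wᵀ S W` where `S := (Y^b)ᵀ R⁻¹ Y^b` is
symmetric, then `P̃(s) := W(s) W(s)ᵀ/(M−1)` satisfies the ensemble-space Riccati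
equation `dP̃/ds = − P̃ S P̃`. -/
theorem stmt_14 {L M : ℕ} (hM : 2 ≤ M)
    (Yb : Matrix (Fin L) (Fin M) ℝ) (R : Matrix (Fin L) (Fin L) ℝ) (hR : R.PosDef)
    (S : Matrix (Fin M) (Fin M) ℝ) (hS : S = Ybᵀ * R⁻¹ * Yb)
    (W : ℝ → Matrix (Fin M) (Fin M) ℝ)
    (hW : ∀ s ∈ Set.Icc (0:ℝ) 1,
      HasDerivWithinAt W
        (-(1 / (2 * ((M : ℝ) - 1))) • (W s * (W s)ᵀ * S * W s))
        (Set.Icc 0 1) s)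
    (Ptil : ℝ → Matrix (Fin M) (Fin M) ℝ)
    (hPtil : ∀ s : ℝ, Ptil s = ((M : ℝ) - 1)⁻¹ • (W s * (W s)ᵀ)) :
    ∀ s ∈ Set.Icc (0:ℝ) 1,
      HasDerivWithinAt Ptil (-(Ptil s * S * Ptil s)) (Set.Icc 0 1) s := by
  intro s hs
  -- symmetric S
  have hSsym : Sᵀ = S := by
    have hRT : Rᵀ = R := hR.isHermitian.eq
    rw [hS]
    simp [Matrix.transpose_mul, Matrix.transpose_nonsing_inv, hRT, Matrix.mul_assoc]
  -- continuous linear maps for multiplication and transpose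
  letI : TopologicalSpace (Matrix (Fin M) (Fin M) ℝ) := Matrix.normedAddCommGroup.toUniformSpace.toTopologicalSpace
  let T : Matrix (Fin M) (Fin M) ℝ →L[ℝ] Matrix (Fin M) (Fin M) ℝ :=
    LinearMap.toContinuousLinearMap
      (Matrix.transposeLinearEquiv (Fin M) (Fin M) ℝ ℝ).toLinearMap
  let B : Matrix (Fin M) (Fin M) ℝ →L[ℝ] Matrix (Fin M) (Fin M) ℝ →L[ℝ] Matrix (Fin M) (Fin M) ℝ :=
    LinearMap.toContinuousLinearMap
      ((LinearMap.toContinuousLinearMap :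
          (Matrix (Fin M) (Fin M) ℝ →ₗ[ℝ] Matrix (Fin M) (Fin M) ℝ) ≃ₗ[ℝ] (Matrix (Fin M) (Fin M) ℝ →L[ℝ] Matrix (Fin M) (Fin M) ℝ)).toLinearMap ∘ₗ (LinearMap.mul ℝ (Matrix (Fin M) (Fin M) ℝ)))
  have hBapp : ∀ x y : Matrix (Fin M) (Fin M) ℝ, B x y = x * y := fun x y => rfl
  set W' : Matrix (Fin M) (Fin M) ℝ := -(1 / (2 * ((M : ℝ) - 1))) • (W s * (W s)ᵀ * S * W s) with hW'
  have hWs := hW s hs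
  -- derivative of s ↦ B (W s)
  have hBW : HasDerivWithinAt (fun t => B (W t)) (B W') (Set.Icc 0 1) s := by
    have hWs' : @HasDerivWithinAt ℝ _ (Matrix (Fin M) (Fin M) ℝ) Matrix.normedAddCommGroup.toAddCommGroup
        Matrix.normedSpace.toModule PseudoMetricSpace.toUniformSpace.toTopologicalSpace _ W W' (Set.Icc 0 1) s := hWs
    exact (B.hasFDerivAt (x := W s)).comp_hasDerivWithinAt s hWs'
  -- derivative of s ↦ (W s)ᵀ
  have hWT : HasDerivWithinAt (fun t => (W t)ᵀ) (W'ᵀ) (Set.Icc 0 1) s := by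
    have := T.hasFDerivAt.comp_hasDerivWithinAt s hWs
    exact this
  have hmul : HasDerivWithinAt (fun t => W t * (W t)ᵀ)
      (B W' ((W s)ᵀ) + B (W s) (W'ᵀ)) (Set.Icc 0 1) s := by
    have := hBW.clm_apply hWT
    exact this
  have key : HasDerivWithinAt (fun t => ((M : ℝ) - 1)⁻¹ • (W t * (W t)ᵀ))
      (((M : ℝ) - 1)⁻¹ • (B W' ((W s)ᵀ) + B (W s) (W'ᵀ))) (Set.Icc 0 1) s := by
    have := hmul.const_smul ((M : ℝ) - 1)⁻¹
    exact this
  have hfun : Ptil = fun t => ((M : ℝ) - 1)⁻¹ • (W t * (W t)ᵀ) := funext hPtil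
  rw [hfun]
  convert key using 1
  show _ = ((M : ℝ) - 1)⁻¹ • (W' * (W s)ᵀ + W s * W'ᵀ)
  have hW'T : W'ᵀ = -(1 / (2 * ((M : ℝ) - 1))) • ((W s)ᵀ * (S * (W s * (W s)ᵀ))) := by
    rw [hW']
    simp [Matrix.transpose_smul, Matrix.transpose_mul, hSsym, Matrix.mul_assoc]
  rw [hW'T, hW']
  simp only [Matrix.smul_mul, Matrix.mul_smul, smul_smul, smul_add, neg_smul, neg_neg,
    Matrix.neg_mul, Matrix.mul_neg, smul_neg, Matrix.mul_assoc]
  have h2 : (2:ℝ) ≤ (M:ℝ) := by exact_mod_cast hM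
  have h1 : ((M:ℝ) - 1) ≠ 0 := by linarith
  have h1' : (-1 + (M:ℝ)) ≠ 0 := by linarith
  have h2' : (-2 + (M:ℝ) * 2) ≠ 0 := by linarith
  match_scalars
  field_simp
  ring
  rfl
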